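/- Let d : ℝ³ → [0,∞) be a function and 0 < c₁ ≤ c₂ constants such that c₁(x² + y² + |z|) ≤ d(x,y,z)² ≤ c₂(x² + y² + |z|) for all (x,y,z) ∈ ℝ³. Let q : (0,2] × ℝ³ → (0,∞) be measurable and suppose: (i) (Chapman–Kolmogorov) for all s,t > 0 with s + t ≤ 2 and all k ∈ ℝ³, ∫_{ℝ³} q_s(g) q_t(g⁻¹·k) dg = q_{s+t}(k), where dg is Lebesgue measure and g⁻¹·k is computed in the Heisenberg group; (ii) there are constants 0 < C₁ ≤ C₂ such that for all t ∈ (0,2] and all g = (x,y,z) with r := √(x²+y²), C₁ (t⁴ + t³ r d(g))^{−1/2} exp(−d(g)²/(4t)) ≤ q_t(g) ≤ C₂ (t⁴ + t³ r d(g))^{−1/2} exp(−d(g)²/(4t)). Then there exists a constant C > 0 such that for all t ∈ (0,1) and all k = (x_k, y_k, z_k) ∈ ℝ³: ∫_{ℝ³} (x_g² + y_g²) q_t(g) q_{1−t}(g⁻¹·k) dg ≤ C (t² d(k)² + t) q₁(k), and moreover ∫₀¹ [ ∫_{ℝ³} (x_g² + y_g²) q_t(g) q_{1−t}(g⁻¹·k)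 dg / q₁(k) ] dt ≤ C (1 + x_k² + y_k² + |z_k|). -/

import Mathlib

open MeasureTheory ProbabilityTheory

noncomputable section

/-- The Heisenberg group as ℝ³. -/
abbrev H : Type := ℝ × ℝ × ℝ

/-- Entropy of `f` with respect to `μ`. -/
def Ent {α : Type*} [MeasurableSpace α] (μ : Measure α) (f : α → ℝ) : ℝ :=
  ∫ a, f a * Real.log (f a) ∂μ - (∫ a, f a ∂μ) * Real.log (∫ a, f a ∂μ)

/-- The Heisenberg group multiplication on ℝ³. -/
def Hmul (g h : H) : H :=
  (g.1 + h.1, g.2.1 + h.2.1, g.2.2 + h.2.2 + (g.1 * h.2.1 - g.2.1 * h.1) / 2)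

/-- The Heisenberg group inverse on ℝ³. -/
def Hinv (g : H) : H := (-g.1, -g.2.1, -g.2.2)

lemma ue_aux (u : ℝ) : u * Real.exp (-u) ≤ (Real.exp 1)⁻¹ := by
  have h : u ≤ Real.exp (u - 1) := by linarith [Real.add_one_le_exp (u - 1)]
  have h2 : Real.exp (u - 1) = Real.exp u * (Real.exp 1)⁻¹ := by
    rw [Real.exp_sub, div_eq_mul_inv]
  calc u * Real.exp (-u) ≤ Real.exp (u - 1) * Real.exp (-u) :=
        mul_le_mul_of_nonneg_right h (Real.exp_pos _).le
    _ = (Real.exp 1)⁻¹ * (Real.exp u * Real.exp (-u)) := by rw [h2]; ring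
    _ = (Real.exp 1)⁻¹ := by rw [← Real.exp_add]; simp

lemma Bcase (c₁ C₁ C₂ t D r2 a St S2 Y qt q2 qs : ℝ)
    (hc₁ : 0 < c₁) (hC₁ : 0 < C₁) (hC₂ : 0 < C₂)
    (ht0 : 0 < t) (hD0 : 0 ≤ D) (hr20 : 0 ≤ r2)
    (hSt : 0 < St) (hS2 : 0 < S2) (hS : S2 ≤ 4 * St)
    (hY : 0 ≤ Y) (hqs0 : 0 ≤ qs)
    (hrd : c₁ * r2 ≤ a ^ 2)
    (hcase : 8 * (t ^ 2 * D ^ 2 + t) < a ^ 2)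
    (hub_t : qt ≤ C₂ * St⁻¹ * Real.exp (-a ^ 2 / (4 * t)))
    (hub_s : qs ≤ C₂ * Y)
    (hlb_2t : C₁ * S2⁻¹ * Real.exp (-a ^ 2 / (4 * (2 * t))) ≤ q2)
    (hlb_s : C₁ * Y ≤ qs) :
    r2 * qt * qs ≤
      64 * C₂ ^ 2 * t * Real.exp (-(t * D ^ 2) / 2) / (c₁ * Real.exp 1 * C₁ ^ 2) * (q2 * qs) := by
  have he1 : (0:ℝ) < Real.exp 1 := Real.exp_pos 1
  have hq20 : 0 ≤ q2 := le_trans (by positivity) hlb_2t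
  have hEsplit : Real.exp (-a ^ 2 / (4 * t)) =
      Real.exp (-a ^ 2 / (16 * t)) * Real.exp (-a ^ 2 / (16 * t)) *
        Real.exp (-a ^ 2 / (4 * (2 * t))) := by
    rw [← Real.exp_add, ← Real.exp_add]
    congr 1
    field_simp
    ring
  have h_first : r2 * Real.exp (-a ^ 2 / (16 * t)) ≤ 16 * t / (c₁ * Real.exp 1) := by
    set u : ℝ := a ^ 2 / (16 * t) with hu
    have hEeq : Real.exp (-a ^ 2 / (16 * t)) = Real.exp (-u) := by rw [hu, neg_div]
    calc r2 * Real.exp (-a ^ 2 / (16 * t)) ≤ (a ^ 2 / c₁) * Real.exp (-a ^ 2 / (16 * t)) :=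
          mul_le_mul_of_nonneg_right ((le_div_iff₀ hc₁).mpr (by linarith)) (Real.exp_pos _).le
      _ = (16 * t / c₁) * (u * Real.exp (-u)) := by rw [hEeq, hu]; field_simp
      _ ≤ (16 * t / c₁) * (Real.exp 1)⁻¹ :=
          mul_le_mul_of_nonneg_left (ue_aux u) (by positivity)
      _ = 16 * t / (c₁ * Real.exp 1) := by field_simp
  have h_second : Real.exp (-a ^ 2 / (16 * t)) ≤ Real.exp (-(t * D ^ 2) / 2) := by
    apply Real.exp_le_exp.mpr
    rw [neg_div, neg_div, neg_le_neg_iff]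
    rw [div_le_div_iff₀ (by norm_num : (0:ℝ) < 2) (by positivity : (0:ℝ) < 16 * t)]
    nlinarith [mul_nonneg ht0.le (mul_nonneg ht0.le (sq_nonneg D))]
  have hinv : St⁻¹ ≤ 4 * S2⁻¹ := by
    rw [inv_eq_one_div, show (4:ℝ) * S2⁻¹ = 4 / S2 by rw [div_eq_mul_inv],
      div_le_div_iff₀ hSt hS2]
    linarith
  have hq2C : S2⁻¹ * Real.exp (-a ^ 2 / (4 * (2 * t))) ≤ q2 / C₁ := by
    rw [le_div_iff₀ hC₁]
    nlinarith [hlb_2t]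
  have hYC : Y ≤ qs / C₁ := by
    rw [le_div_iff₀ hC₁]
    nlinarith [hlb_s]
  calc r2 * qt * qs
      ≤ r2 * (C₂ * St⁻¹ * Real.exp (-a ^ 2 / (4 * t))) * (C₂ * Y) := by
        have h1 : r2 * qt ≤ r2 * (C₂ * St⁻¹ * Real.exp (-a ^ 2 / (4 * t))) :=
          mul_le_mul_of_nonneg_left hub_t hr20
        exact mul_le_mul h1 hub_s hqs0 (by positivity)
    _ = C₂ ^ 2 * ((St⁻¹ * ((r2 * Real.exp (-a ^ 2 / (16 * t))) * Real.exp (-a ^ 2 / (16 * t)))) *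
          Real.exp (-a ^ 2 / (4 * (2 * t)))) * Y := by
        rw [hEsplit]; ring
    _ ≤ C₂ ^ 2 * (((4 * S2⁻¹) * ((16 * t / (c₁ * Real.exp 1)) * Real.exp (-(t * D ^ 2) / 2))) *
          Real.exp (-a ^ 2 / (4 * (2 * t)))) * Y := by
        apply mul_le_mul_of_nonneg_right _ hY
        apply mul_le_mul_of_nonneg_left _ (by positivity : (0:ℝ) ≤ C₂ ^ 2)
        apply mul_le_mul_of_nonneg_right _ (Real.exp_pos _).le
        apply mul_le_mul hinv _ (by positivity) (by positivity)
        exact mul_le_mul h_first h_second (Real.exp_pos _).le (by positivity)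
    _ = (64 * C₂ ^ 2 * t * Real.exp (-(t * D ^ 2) / 2) / (c₁ * Real.exp 1)) *
          ((S2⁻¹ * Real.exp (-a ^ 2 / (4 * (2 * t)))) * Y) := by
        ring
    _ ≤ (64 * C₂ ^ 2 * t * Real.exp (-(t * D ^ 2) / 2) / (c₁ * Real.exp 1)) *
          ((q2 / C₁) * (qs / C₁)) := by
        apply mul_le_mul_of_nonneg_left _ (by positivity)
        exact mul_le_mul hq2C hYC (by positivity) (by positivity)
    _ = 64 * C₂ ^ 2 * t * Real.exp (-(t * D ^ 2) / 2) / (c₁ * Real.exp 1 * C₁ ^ 2) *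
          (q2 * qs) := by
        ring


set_option maxHeartbeats 2000000 in
theorem bridge_control
    (d : H → ℝ) (hd0 : ∀ g, 0 ≤ d g)
    (c₁ c₂ : ℝ) (hc₁ : 0 < c₁) (hc₁₂ : c₁ ≤ c₂)
    (hd : ∀ g : H, c₁ * (g.1 ^ 2 + g.2.1 ^ 2 + |g.2.2|) ≤ (d g) ^ 2 ∧
      (d g) ^ 2 ≤ c₂ * (g.1 ^ 2 + g.2.1 ^ 2 + |g.2.2|))
    (q : ℝ → H → ℝ)
    (hqpos : ∀ t ∈ Set.Ioc (0:ℝ) 2, ∀ g : H, 0 < q t g)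
    (hqmeas : Measurable fun p : ℝ × H => q p.1 p.2)
    (hCK : ∀ s t : ℝ, 0 < s → 0 < t → s + t ≤ 2 → ∀ k : H,
      (∫ g : H, q s g * q t (Hmul (Hinv g) k)) = q (s + t) k)
    (C₁ C₂ : ℝ) (hC₁ : 0 < C₁) (hC₁₂ : C₁ ≤ C₂)
    (hbound : ∀ t ∈ Set.Ioc (0:ℝ) 2, ∀ g : H,
      C₁ * (Real.sqrt (t ^ 4 + t ^ 3 * Real.sqrt (g.1 ^ 2 + g.2.1 ^ 2) * d g))⁻¹ *
          Real.exp (-(d g) ^ 2 / (4 * t)) ≤ q t g ∧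
      q t g ≤ C₂ * (Real.sqrt (t ^ 4 + t ^ 3 * Real.sqrt (g.1 ^ 2 + g.2.1 ^ 2) * d g))⁻¹ *
          Real.exp (-(d g) ^ 2 / (4 * t))) :
    ∃ C > (0:ℝ),
      (∀ t ∈ Set.Ioo (0:ℝ) 1, ∀ k : H,
        (∫ g : H, (g.1 ^ 2 + g.2.1 ^ 2) * q t g * q (1 - t) (Hmul (Hinv g) k)) ≤
          C * (t ^ 2 * (d k) ^ 2 + t) * q 1 k) ∧
      ∀ k : H,
        (∫ t in Set.Ioo (0:ℝ) 1,
          (∫ g : H, (g.1 ^ 2 + g.2.1 ^ 2) * q t g * q (1 - t) (Hmul (Hinv g) k)) / q 1 k) ≤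
          C * (1 + k.1 ^ 2 + k.2.1 ^ 2 + |k.2.2|) := by
  have hc₂ : 0 < c₂ := lt_of_lt_of_le hc₁ hc₁₂
  have hC₂pos : 0 < C₂ := lt_of_lt_of_le hC₁ hC₁₂
  have he1 : (0:ℝ) < Real.exp 1 := Real.exp_pos 1
  set γ : ℝ := 64 * C₂ ^ 3 / (c₁ * Real.exp 1 * C₁ ^ 3) with hγdef
  have hγpos : 0 < γ := by positivity
  set C₀ : ℝ := 8 / c₁ + γ with hC₀def
  have hC₀pos : 0 < C₀ := by positivity
  have mq : ∀ u : ℝ, Measurable (fun g : H => q u g) := fun u =>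
    hqmeas.comp (measurable_const.prodMk measurable_id)
  have h1I : (1:ℝ) ∈ Set.Ioc (0:ℝ) 2 := ⟨one_pos, by norm_num⟩
  have key : ∀ t ∈ Set.Ioo (0:ℝ) 1, ∀ k : H,
      (∫ g : H, (g.1 ^ 2 + g.2.1 ^ 2) * q t g * q (1 - t) (Hmul (Hinv g) k)) ≤
        C₀ * (t ^ 2 * (d k) ^ 2 + t) * q 1 k := by
    rintro t ⟨ht0, ht1⟩ k
    have hs0 : (0:ℝ) < 1 - t := by linarith
    have htI : t ∈ Set.Ioc (0:ℝ) 2 := ⟨ht0, by linarith⟩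
    have hsI : 1 - t ∈ Set.Ioc (0:ℝ) 2 := ⟨hs0, by linarith⟩
    have h2tI : 2 * t ∈ Set.Ioc (0:ℝ) 2 := ⟨by linarith, by linarith⟩
    have h1tI : 1 + t ∈ Set.Ioc (0:ℝ) 2 := ⟨by linarith, by linarith⟩
    have hq1pos : 0 < q 1 k := hqpos 1 h1I k
    have hq1tpos : 0 < q (1 + t) k := hqpos (1 + t) h1tI k
    set D := d k with hDdef
    have hD0 : 0 ≤ D := hd0 k
    have hck1 : (∫ g : H, q t g * q (1 - t) (Hmul (Hinv g) k)) = q 1 k := by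
      have h := hCK t (1 - t) ht0 hs0 (by linarith) k
      rwa [show t + (1 - t) = (1:ℝ) by ring] at h
    have hck2 : (∫ g : H, q (2 * t) g * q (1 - t) (Hmul (Hinv g) k)) = q (1 + t) k := by
      have h := hCK (2 * t) (1 - t) (by linarith) hs0 (by linarith) k
      rwa [show 2 * t + (1 - t) = 1 + t by ring] at h
    have hint1 : Integrable (fun g : H => q t g * q (1 - t) (Hmul (Hinv g) k)) := by
      by_contra hni
      rw [integral_undef hni] at hck1
      exact hq1pos.ne' hck1.symm
    have hint2 : Integrable (fun g : H => q (2 * t) g * q (1 - t) (Hmul (Hinv g) k)) := by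
      by_contra hni
      rw [integral_undef hni] at hck2
      exact hq1tpos.ne' hck2.symm
    set α : ℝ := 8 / c₁ * (t ^ 2 * D ^ 2 + t) with hαdef
    set β : ℝ := 64 * C₂ ^ 2 * t * Real.exp (-(t * D ^ 2) / 2) / (c₁ * Real.exp 1 * C₁ ^ 2)
      with hβdef
    have hα0 : 0 ≤ α := by positivity
    have hβ0 : 0 ≤ β := by positivity
    have hptw : ∀ g : H, (g.1 ^ 2 + g.2.1 ^ 2) * q t g * q (1 - t) (Hmul (Hinv g) k) ≤
        α * (q t g * q (1 - t) (Hmul (Hinv g) k)) +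
        β * (q (2 * t) g * q (1 - t) (Hmul (Hinv g) k)) := by
      intro g
      have hqt : 0 < q t g := hqpos t htI g
      have hqs : 0 < q (1 - t) (Hmul (Hinv g) k) := hqpos _ hsI _
      have hq2 : 0 < q (2 * t) g := hqpos _ h2tI g
      have hr0 : (0:ℝ) ≤ g.1 ^ 2 + g.2.1 ^ 2 := by positivity
      have ha0 : 0 ≤ d g := hd0 g
      have hrd : c₁ * (g.1 ^ 2 + g.2.1 ^ 2) ≤ (d g) ^ 2 := by
        have h := (hd g).1
        have h2 := abs_nonneg g.2.2
        nlinarith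
      by_cases hcase : (d g) ^ 2 ≤ 8 * (t ^ 2 * D ^ 2 + t)
      · have hr : g.1 ^ 2 + g.2.1 ^ 2 ≤ α := by
          rw [hαdef, div_mul_eq_mul_div, le_div_iff₀ hc₁]
          nlinarith
        have h1 : (g.1 ^ 2 + g.2.1 ^ 2) * q t g * q (1 - t) (Hmul (Hinv g) k) ≤
            α * (q t g * q (1 - t) (Hmul (Hinv g) k)) := by
          rw [mul_assoc]
          exact mul_le_mul_of_nonneg_right hr (by positivity)
        have h2 : 0 ≤ β * (q (2 * t) g * q (1 - t) (Hmul (Hinv g) k)) := by positivity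
        linarith
      · push_neg at hcase
        have hrr0 : 0 ≤ Real.sqrt (g.1 ^ 2 + g.2.1 ^ 2) := Real.sqrt_nonneg _
        have hSt_pos : 0 < Real.sqrt (t ^ 4 + t ^ 3 * Real.sqrt (g.1 ^ 2 + g.2.1 ^ 2) * d g) :=
          Real.sqrt_pos.mpr (by positivity)
        have hS2_pos : 0 < Real.sqrt ((2 * t) ^ 4 +
            (2 * t) ^ 3 * Real.sqrt (g.1 ^ 2 + g.2.1 ^ 2) * d g) :=
          Real.sqrt_pos.mpr (by positivity)
        have hS : Real.sqrt ((2 * t) ^ 4 + (2 * t) ^ 3 * Real.sqrt (g.1 ^ 2 + g.2.1 ^ 2) * d g) ≤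
            4 * Real.sqrt (t ^ 4 + t ^ 3 * Real.sqrt (g.1 ^ 2 + g.2.1 ^ 2) * d g) := by
          have h16 : (2 * t) ^ 4 + (2 * t) ^ 3 * Real.sqrt (g.1 ^ 2 + g.2.1 ^ 2) * d g ≤
              16 * (t ^ 4 + t ^ 3 * Real.sqrt (g.1 ^ 2 + g.2.1 ^ 2) * d g) := by
            nlinarith [mul_nonneg (mul_nonneg (pow_nonneg ht0.le 3) hrr0) ha0]
          have h4 : Real.sqrt 16 = 4 := by
            rw [show (16:ℝ) = 4 ^ 2 by norm_num]
            exact Real.sqrt_sq (by norm_num)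
          calc Real.sqrt ((2 * t) ^ 4 + (2 * t) ^ 3 * Real.sqrt (g.1 ^ 2 + g.2.1 ^ 2) * d g)
              ≤ Real.sqrt (16 * (t ^ 4 + t ^ 3 * Real.sqrt (g.1 ^ 2 + g.2.1 ^ 2) * d g)) :=
                Real.sqrt_le_sqrt h16
            _ = 4 * Real.sqrt (t ^ 4 + t ^ 3 * Real.sqrt (g.1 ^ 2 + g.2.1 ^ 2) * d g) := by
                rw [Real.sqrt_mul (by norm_num : (0:ℝ) ≤ 16), h4]
        obtain ⟨-, hub_t⟩ := hbound t htI g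
        obtain ⟨hlb_s, hub_s⟩ := hbound (1 - t) hsI (Hmul (Hinv g) k)
        obtain ⟨hlb_2t, -⟩ := hbound (2 * t) h2tI g
        have hB := Bcase c₁ C₁ C₂ t D (g.1 ^ 2 + g.2.1 ^ 2) (d g)
          (Real.sqrt (t ^ 4 + t ^ 3 * Real.sqrt (g.1 ^ 2 + g.2.1 ^ 2) * d g))
          (Real.sqrt ((2 * t) ^ 4 + (2 * t) ^ 3 * Real.sqrt (g.1 ^ 2 + g.2.1 ^ 2) * d g))
          ((Real.sqrt ((1 - t) ^ 4 + (1 - t) ^ 3 *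
              Real.sqrt ((Hmul (Hinv g) k).1 ^ 2 + (Hmul (Hinv g) k).2.1 ^ 2) *
              d (Hmul (Hinv g) k)))⁻¹ *
            Real.exp (-(d (Hmul (Hinv g) k)) ^ 2 / (4 * (1 - t))))
          (q t g) (q (2 * t) g) (q (1 - t) (Hmul (Hinv g) k))
          hc₁ hC₁ hC₂pos ht0 hD0 hr0 hSt_pos hS2_pos hS (by positivity) hqs.le
          hrd hcase hub_t (by rw [← mul_assoc]; exact hub_s) hlb_2t
          (by rw [← mul_assoc]; exact hlb_s)
        have h2 : 0 ≤ α * (q t g * q (1 - t) (Hmul (Hinv g) k)) := by positivity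
        calc (g.1 ^ 2 + g.2.1 ^ 2) * q t g * q (1 - t) (Hmul (Hinv g) k)
            ≤ 64 * C₂ ^ 2 * t * Real.exp (-(t * D ^ 2) / 2) / (c₁ * Real.exp 1 * C₁ ^ 2) *
              (q (2 * t) g * q (1 - t) (Hmul (Hinv g) k)) := hB
          _ = β * (q (2 * t) g * q (1 - t) (Hmul (Hinv g) k)) := by rw [hβdef]
          _ ≤ α * (q t g * q (1 - t) (Hmul (Hinv g) k)) +
              β * (q (2 * t) g * q (1 - t) (Hmul (Hinv g) k)) := by linarith
    -- measurability / integrability of the weighted integrand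
    have mHk : Measurable fun g : H => Hmul (Hinv g) k := by
      unfold Hmul Hinv
      fun_prop
    have m1 : Measurable fun g : H => g.1 ^ 2 + g.2.1 ^ 2 := by fun_prop
    have hfmeas : AEStronglyMeasurable
        (fun g : H => (g.1 ^ 2 + g.2.1 ^ 2) * q t g * q (1 - t) (Hmul (Hinv g) k)) volume :=
      ((m1.mul (mq t)).mul ((mq (1 - t)).comp mHk)).aestronglyMeasurable
    have hintαβ : Integrable (fun g : H =>
        α * (q t g * q (1 - t) (Hmul (Hinv g) k)) +
        β * (q (2 * t) g * q (1 - t) (Hmul (Hinv g) k))) :=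
      (hint1.const_mul α).add (hint2.const_mul β)
    have hfint : Integrable
        (fun g : H => (g.1 ^ 2 + g.2.1 ^ 2) * q t g * q (1 - t) (Hmul (Hinv g) k)) := by
      apply hintαβ.mono' hfmeas
      filter_upwards with g
      rw [Real.norm_of_nonneg (mul_nonneg (mul_nonneg (by positivity) (hqpos t htI g).le)
        (hqpos _ hsI _).le)]
      exact hptw g
    have hIle : (∫ g : H, (g.1 ^ 2 + g.2.1 ^ 2) * q t g * q (1 - t) (Hmul (Hinv g) k)) ≤
        α * q 1 k + β * q (1 + t) k := by
      have h := integral_mono hfint hintαβ hptw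
      rwa [integral_add (hint1.const_mul α) (hint2.const_mul β), integral_const_mul,
        integral_const_mul, hck1, hck2] at h
    have hfinal : β * q (1 + t) k ≤ γ * t * q 1 k := by
      obtain ⟨-, hub⟩ := hbound (1 + t) h1tI k
      obtain ⟨hlb, -⟩ := hbound 1 h1I k
      rw [← hDdef] at hub hlb
      set R : ℝ := Real.sqrt (k.1 ^ 2 + k.2.1 ^ 2) with hR
      have hR0 : 0 ≤ R := hR ▸ Real.sqrt_nonneg _
      have hS1pos : 0 < Real.sqrt (1 ^ 4 + 1 ^ 3 * R * D) :=
        Real.sqrt_pos.mpr (by nlinarith [mul_nonneg hR0 hD0])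
      have hmono : (Real.sqrt ((1 + t) ^ 4 + (1 + t) ^ 3 * R * D))⁻¹ ≤
          (Real.sqrt (1 ^ 4 + 1 ^ 3 * R * D))⁻¹ := by
        apply inv_anti₀ hS1pos
        apply Real.sqrt_le_sqrt
        have h3 : (0:ℝ) ≤ (1 + t) ^ 3 - 1 := by nlinarith
        nlinarith [mul_nonneg h3 (mul_nonneg hR0 hD0)]
      have hexp : Real.exp (-(t * D ^ 2) / 2) * Real.exp (-D ^ 2 / (4 * (1 + t))) ≤
          Real.exp (-D ^ 2 / (4 * 1)) := by
        rw [← Real.exp_add, Real.exp_le_exp]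
        have h1t : (0:ℝ) < 1 + t := by linarith
        have e1 : D ^ 2 / (4 * (1 + t)) = D ^ 2 / 4 - t * D ^ 2 / (4 * (1 + t)) := by
          field_simp
          ring
        have e2 : t * D ^ 2 / (4 * (1 + t)) ≤ t * D ^ 2 / 2 := by
          rw [div_le_div_iff₀ (by positivity) (by norm_num)]
          nlinarith [mul_nonneg ht0.le (sq_nonneg D)]
        rw [show (4:ℝ) * 1 = 4 by norm_num, neg_div, neg_div, neg_div]
        linarith
      calc β * q (1 + t) k
          ≤ β * (C₂ * (Real.sqrt ((1 + t) ^ 4 + (1 + t) ^ 3 * R * D))⁻¹ *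
              Real.exp (-D ^ 2 / (4 * (1 + t)))) := mul_le_mul_of_nonneg_left hub hβ0
        _ = (64 * C₂ ^ 3 * t / (c₁ * Real.exp 1 * C₁ ^ 2)) *
              ((Real.sqrt ((1 + t) ^ 4 + (1 + t) ^ 3 * R * D))⁻¹ *
                (Real.exp (-(t * D ^ 2) / 2) * Real.exp (-D ^ 2 / (4 * (1 + t))))) := by
            rw [hβdef]; ring
        _ ≤ (64 * C₂ ^ 3 * t / (c₁ * Real.exp 1 * C₁ ^ 2)) *
              ((Real.sqrt (1 ^ 4 + 1 ^ 3 * R * D))⁻¹ * Real.exp (-D ^ 2 / (4 * 1))) := by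
            apply mul_le_mul_of_nonneg_left _ (by positivity)
            exact mul_le_mul hmono hexp (by positivity) (by positivity)
        _ = γ * t * (C₁ * (Real.sqrt (1 ^ 4 + 1 ^ 3 * R * D))⁻¹ *
              Real.exp (-D ^ 2 / (4 * 1))) := by
            rw [hγdef]
            field_simp
        _ ≤ γ * t * q 1 k := mul_le_mul_of_nonneg_left hlb (by positivity)
    calc (∫ g : H, (g.1 ^ 2 + g.2.1 ^ 2) * q t g * q (1 - t) (Hmul (Hinv g) k))
        ≤ α * q 1 k + β * q (1 + t) k := hIle
      _ ≤ α * q 1 k + γ * t * q 1 k := by linarith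
      _ ≤ C₀ * (t ^ 2 * D ^ 2 + t) * q 1 k := by
          rw [hαdef, hC₀def]
          have ht' : t ≤ t ^ 2 * D ^ 2 + t := by nlinarith [sq_nonneg (t * D)]
          nlinarith [mul_le_mul_of_nonneg_right
            (mul_le_mul_of_nonneg_left ht' hγpos.le) hq1pos.le]
  refine ⟨C₀ * (1 + c₂), by positivity, ?_, ?_⟩
  · intro t ht k
    have h := key t ht k
    have hq1pos : 0 < q 1 k := hqpos 1 h1I k
    have hX : 0 ≤ (t ^ 2 * (d k) ^ 2 + t) * q 1 k := by
      have := ht.1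
      positivity
    nlinarith [mul_nonneg (mul_nonneg hC₀pos.le hc₂.le) hX]
  · intro k
    have hq1pos : 0 < q 1 k := hqpos 1 h1I k
    have hS0 : 0 ≤ k.1 ^ 2 + k.2.1 ^ 2 + |k.2.2| := by positivity
    have hDB : (d k) ^ 2 ≤ c₂ * (k.1 ^ 2 + k.2.1 ^ 2 + |k.2.2|) := (hd k).2
    have hRbound : ∀ t ∈ Set.Ioo (0:ℝ) 1,
        (∫ g : H, (g.1 ^ 2 + g.2.1 ^ 2) * q t g * q (1 - t) (Hmul (Hinv g) k)) / q 1 k ≤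
          C₀ * ((d k) ^ 2 + 1) := by
      intro t ht
      rw [div_le_iff₀ hq1pos]
      have h := key t ht k
      have h2 : C₀ * (t ^ 2 * (d k) ^ 2 + t) * q 1 k ≤ C₀ * ((d k) ^ 2 + 1) * q 1 k := by
        obtain ⟨ht0, ht1⟩ := ht
        have h3 : (0:ℝ) ≤ 1 - t ^ 2 := by nlinarith
        nlinarith [mul_nonneg (mul_nonneg hC₀pos.le (mul_nonneg h3 (sq_nonneg (d k)))) hq1pos.le,
          mul_nonneg (mul_nonneg hC₀pos.le (by linarith : (0:ℝ) ≤ 1 - t)) hq1pos.le]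
      linarith
    by_cases hR : IntegrableOn (fun t : ℝ =>
        (∫ g : H, (g.1 ^ 2 + g.2.1 ^ 2) * q t g * q (1 - t) (Hmul (Hinv g) k)) / q 1 k)
        (Set.Ioo (0:ℝ) 1) volume
    · have h1 : (∫ t in Set.Ioo (0:ℝ) 1,
          (∫ g : H, (g.1 ^ 2 + g.2.1 ^ 2) * q t g * q (1 - t) (Hmul (Hinv g) k)) / q 1 k) ≤
          ∫ _t in Set.Ioo (0:ℝ) 1, C₀ * ((d k) ^ 2 + 1) := by
        apply setIntegral_mono_on hR _ measurableSet_Ioo hRbound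
        exact integrableOn_const (by rw [Real.volume_Ioo]; exact ENNReal.ofReal_ne_top)
      have h2 : (∫ _t in Set.Ioo (0:ℝ) 1, C₀ * ((d k) ^ 2 + 1)) = C₀ * ((d k) ^ 2 + 1) := by
        rw [setIntegral_const, Real.volume_real_Ioo]
        norm_num
      have h3 : C₀ * ((d k) ^ 2 + 1) ≤ C₀ * (1 + c₂) * (1 + k.1 ^ 2 + k.2.1 ^ 2 + |k.2.2|) := by
        nlinarith [mul_nonneg hC₀pos.le hS0, mul_nonneg hC₀pos.le hc₂.le,
          mul_nonneg (mul_nonneg hC₀pos.le hc₂.le) hS0]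
      exact le_trans (le_trans h1 (le_of_eq h2)) h3
    · rw [integral_undef hR]
      positivity


end
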